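/- Let A ∈ ℝ^{n×n} and X₀ ∈ ℝ^{n×q} with X₀ ≠ 0 and A X₀ ≠ 0, and set α_heur := ‖A X₀‖_F / ‖X₀‖_F. Then α_heur minimizes α ↦ ‖(A + α I_n) X₀‖_F² / α over α > 0; that is, for every α > 0, ‖(A + α_heur I_n) X₀‖_F² / α_heur ≤ ‖(A + α I_n) X₀‖_F² / α. -/

import Mathlib

open Matrix

lemma sumsq_nonneg {n q : ℕ} (M : Matrix (Fin n) (Fin q) ℝ) :
    0 ≤ ∑ i, ∑ j, M i j ^ 2 :=
  Finset.sum_nonneg fun _ _ => Finset.sum_nonneg fun _ _ => sq_nonneg _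

lemma sumsq_pos {n q : ℕ} (M : Matrix (Fin n) (Fin q) ℝ) (hM : M ≠ 0) :
    0 < ∑ i, ∑ j, M i j ^ 2 := by
  rcases (sumsq_nonneg M).lt_or_eq with h | h
  · exact h
  · exfalso
    apply hM
    ext i j
    have h1 : ∀ i ∈ Finset.univ, ∑ j, M i j ^ 2 = 0 :=
      (Finset.sum_eq_zero_iff_of_nonneg (fun _ _ =>
        Finset.sum_nonneg fun _ _ => sq_nonneg _)).1 h.symm
    have h2 : ∀ j ∈ Finset.univ, M i j ^ 2 = 0 :=
      (Finset.sum_eq_zero_iff_of_nonneg (fun _ _ => sq_nonneg _)).1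
        (h1 i (Finset.mem_univ i))
    have := h2 j (Finset.mem_univ j)
    simpa using pow_eq_zero_iff (n := 2) (by norm_num) |>.1 this

/-- The heuristic `α_heur = ‖A X₀‖_F / ‖X₀‖_F` minimizes
`α ↦ ‖(A + α I) X₀‖_F² / α` over `α > 0`. -/
theorem alpha_heur_minimizes
    {n q : ℕ}
    (A : Matrix (Fin n) (Fin n) ℝ) (X₀ : Matrix (Fin n) (Fin q) ℝ)
    (hX₀ : X₀ ≠ 0) (hAX₀ : A * X₀ ≠ 0)
    (frob : Matrix (Fin n) (Fin q) ℝ → ℝ)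
    (hfrob : ∀ M, frob M = Real.sqrt (∑ i, ∑ j, M i j ^ 2))
    (αh : ℝ) (hαh : αh = frob (A * X₀) / frob X₀) :
    ∀ α, 0 < α →
      frob ((A + αh • (1 : Matrix (Fin n) (Fin n) ℝ)) * X₀) ^ 2 / αh ≤
      frob ((A + α • (1 : Matrix (Fin n) (Fin n) ℝ)) * X₀) ^ 2 / α := by
  intro α hα
  set a : ℝ := ∑ i, ∑ j, (A * X₀) i j ^ 2 with ha_def
  set b : ℝ := ∑ i, ∑ j, X₀ i j ^ 2 with hb_def
  set c : ℝ := ∑ i, ∑ j, (A * X₀) i j * X₀ i j with hc_def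
  have ha : 0 < a := sumsq_pos _ hAX₀
  have hb : 0 < b := sumsq_pos _ hX₀
  have hah : αh = Real.sqrt a / Real.sqrt b := by
    rw [hαh, hfrob, hfrob]
  have hahpos : 0 < αh := by
    rw [hah]
    positivity
  -- key expansion
  have key : ∀ β : ℝ,
      frob ((A + β • (1 : Matrix (Fin n) (Fin n) ℝ)) * X₀) ^ 2
        = a + 2 * β * c + β ^ 2 * b := by
    intro β
    have hM : (A + β • (1 : Matrix (Fin n) (Fin n) ℝ)) * X₀ = A * X₀ + β • X₀ := by
      rw [Matrix.add_mul, Matrix.smul_mul, Matrix.one_mul]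
    have hnn : (0:ℝ) ≤ ∑ i, ∑ j, ((A + β • (1 : Matrix (Fin n) (Fin n) ℝ)) * X₀) i j ^ 2 :=
      sumsq_nonneg _
    rw [hfrob, Real.sq_sqrt hnn]
    have : ∀ i j, ((A + β • (1 : Matrix (Fin n) (Fin n) ℝ)) * X₀) i j
        = (A * X₀) i j + β * X₀ i j := by
      intro i j; rw [hM]; simp [Matrix.add_apply, Matrix.smul_apply]
    calc ∑ i, ∑ j, ((A + β • (1 : Matrix (Fin n) (Fin n) ℝ)) * X₀) i j ^ 2
        = ∑ i, ∑ j, ((A * X₀) i j ^ 2 + 2 * β * ((A * X₀) i j * X₀ i j)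
            + β ^ 2 * X₀ i j ^ 2) := by
          apply Finset.sum_congr rfl; intro i _
          apply Finset.sum_congr rfl; intro j _
          rw [this i j]; ring
      _ = a + 2 * β * c + β ^ 2 * b := by
          simp only [Finset.sum_add_distrib, ← Finset.mul_sum]; rfl
  rw [key, key]
  have hsa : Real.sqrt a ^ 2 = a := Real.sq_sqrt ha.le
  have hsb : Real.sqrt b ^ 2 = b := Real.sq_sqrt hb.le
  have hsapos : 0 < Real.sqrt a := Real.sqrt_pos.2 ha
  have hsbpos : 0 < Real.sqrt b := Real.sqrt_pos.2 hb
  rw [div_le_div_iff₀ hahpos hα]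
  have hah2 : αh ^ 2 * b = a := by
    have h2 : αh ^ 2 = a / b := by rw [hah, div_pow, hsa, hsb]
    rw [h2]; field_simp
  nlinarith [sq_nonneg (Real.sqrt a - α * Real.sqrt b), sq_nonneg (α - αh),
    mul_pos hα hahpos, sq_nonneg (Real.sqrt a * Real.sqrt b * (α - αh)),
    mul_pos hsapos hsbpos, sq_nonneg (α * Real.sqrt b - αh * Real.sqrt b)]
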